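/- In the network model, for every scheduling variable U with U k f ∈ {0,1}, every beamformer collection V, every Γ : 𝓚 → 𝓕 → ℝ with Γ k f > −1 for all k, f, and every Y : 𝓚 → 𝓕 → ℂ, one has f_q(U, V, Γ, Y) ≤ f_r(U, V, Γ), with equality if and only if Y k f = √((w k)·(1 + Γ k f))·(U k f)·⟪V k f, h k (β k) f⟫ / (S_{k,f}(U,V) + I_{k,f}(U,V)) for every k and f. -/

import Mathlib

open scoped BigOperators

variable {𝓑 𝓕 𝓚 : Type*}

/-- Signal power `S_{k,f}(U,V) = U k f · |⟪h k (β k) f, V k f⟫|²`. -/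
noncomputable def sigPow {M : ℕ} (β : 𝓚 → 𝓑)
    (h : 𝓚 → 𝓑 → 𝓕 → EuclideanSpace ℂ (Fin M))
    (U : 𝓚 → 𝓕 → ℝ) (V : 𝓚 → 𝓕 → EuclideanSpace ℂ (Fin M)) (k : 𝓚) (f : 𝓕) : ℝ :=
  U k f * ‖(inner ℂ (h k (β k) f) (V k f) : ℂ)‖ ^ 2

/-- Interference-plus-noise power
`I_{k,f}(U,V) = ∑_{k' ≠ k} U k' f · |⟪h k (β k') f, V k' f⟫|² + (σ k f)²`. -/
noncomputable def intPow {M : ℕ} [Fintype 𝓚] [DecidableEq 𝓚] (β : 𝓚 → 𝓑)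
    (h : 𝓚 → 𝓑 → 𝓕 → EuclideanSpace ℂ (Fin M)) (σ : 𝓚 → 𝓕 → ℝ)
    (U : 𝓚 → 𝓕 → ℝ) (V : 𝓚 → 𝓕 → EuclideanSpace ℂ (Fin M)) (k : 𝓚) (f : 𝓕) : ℝ :=
  (∑ k' ∈ Finset.univ.erase k,
      U k' f * ‖(inner ℂ (h k (β k') f) (V k' f) : ℂ)‖ ^ 2) + (σ k f) ^ 2

/-- SINR `γ_{k,f}(U,V) = S_{k,f}(U,V) / I_{k,f}(U,V)`. -/
noncomputable def sinr {M : ℕ} [Fintype 𝓚] [DecidableEq 𝓚] (β : 𝓚 → 𝓑)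
    (h : 𝓚 → 𝓑 → 𝓕 → EuclideanSpace ℂ (Fin M)) (σ : 𝓚 → 𝓕 → ℝ)
    (U : 𝓚 → 𝓕 → ℝ) (V : 𝓚 → 𝓕 → EuclideanSpace ℂ (Fin M)) (k : 𝓚) (f : 𝓕) : ℝ :=
  sigPow β h U V k f / intPow β h σ U V k f

/-- Weighted sum rate `f₀(U,V) = ∑_{k,f} w k · log(1 + γ_{k,f}(U,V))`. -/
noncomputable def f0 {M : ℕ} [Fintype 𝓚] [DecidableEq 𝓚] [Fintype 𝓕] (β : 𝓚 → 𝓑)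
    (h : 𝓚 → 𝓑 → 𝓕 → EuclideanSpace ℂ (Fin M)) (w : 𝓚 → ℝ) (σ : 𝓚 → 𝓕 → ℝ)
    (U : 𝓚 → 𝓕 → ℝ) (V : 𝓚 → 𝓕 → EuclideanSpace ℂ (Fin M)) : ℝ :=
  ∑ k, ∑ f, w k * Real.log (1 + sinr β h σ U V k f)

/-- Lagrangian-dual-transform objective `f_r(U,V,Γ)`. -/
noncomputable def fr {M : ℕ} [Fintype 𝓚] [DecidableEq 𝓚] [Fintype 𝓕] (β : 𝓚 → 𝓑)
    (h : 𝓚 → 𝓑 → 𝓕 → EuclideanSpace ℂ (Fin M)) (w : 𝓚 → ℝ) (σ : 𝓚 → 𝓕 → ℝ)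
    (U : 𝓚 → 𝓕 → ℝ) (V : 𝓚 → 𝓕 → EuclideanSpace ℂ (Fin M)) (Γ : 𝓚 → 𝓕 → ℝ) : ℝ :=
  ∑ k, ∑ f,
    (w k * Real.log (1 + Γ k f) - w k * Γ k f +
      w k * (1 + Γ k f) * sigPow β h U V k f /
        (sigPow β h U V k f + intPow β h σ U V k f))

/-- Quadratic-transform objective `f_q(U,V,Γ,Y)`. -/
noncomputable def fq {M : ℕ} [Fintype 𝓚] [DecidableEq 𝓚] [Fintype 𝓕] (β : 𝓚 → 𝓑)
    (h : 𝓚 → 𝓑 → 𝓕 → EuclideanSpace ℂ (Fin M)) (w : 𝓚 → ℝ) (σ : 𝓚 → 𝓕 → ℝ)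
    (U : 𝓚 → 𝓕 → ℝ) (V : 𝓚 → 𝓕 → EuclideanSpace ℂ (Fin M)) (Γ : 𝓚 → 𝓕 → ℝ)
    (Y : 𝓚 → 𝓕 → ℂ) : ℝ :=
  ∑ k, ∑ f,
    (w k * (Real.log (1 + Γ k f) - Γ k f) +
      2 * ((starRingEnd ℂ) (Y k f) *
        (((Real.sqrt (w k * (1 + Γ k f)) * U k f : ℝ) : ℂ) *
          (inner ℂ (V k f) (h k (β k) f) : ℂ))).re -
      ‖Y k f‖ ^ 2 * (sigPow β h U V k f + intPow β h σ U V k f))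

lemma key_ineq (D : ℝ) (hD : 0 < D) (a Y : ℂ) :
    (2 * ((starRingEnd ℂ) Y * a).re - ‖Y‖ ^ 2 * D ≤ ‖a‖ ^ 2 / D) ∧
    (2 * ((starRingEnd ℂ) Y * a).re - ‖Y‖ ^ 2 * D = ‖a‖ ^ 2 / D ↔
      Y = a / (D : ℂ)) := by
  have hre : ((starRingEnd ℂ) Y * a).re = Y.re * a.re + Y.im * a.im := by
    simp [Complex.mul_re]
  have haa : ‖a‖ ^ 2 = a.re ^ 2 + a.im ^ 2 := by
    rw [Complex.sq_norm, Complex.normSq_apply]; ring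
  have hYY : ‖Y‖ ^ 2 = Y.re ^ 2 + Y.im ^ 2 := by
    rw [Complex.sq_norm, Complex.normSq_apply]; ring
  have hDne : D ≠ 0 := ne_of_gt hD
  have hid : ‖a‖ ^ 2 / D - (2 * ((starRingEnd ℂ) Y * a).re
      - ‖Y‖ ^ 2 * D) = ((a.re - D * Y.re) ^ 2 + (a.im - D * Y.im) ^ 2) / D := by
    rw [hre, haa, hYY]; field_simp; ring
  have hpos : 0 ≤ ((a.re - D * Y.re) ^ 2 + (a.im - D * Y.im) ^ 2) / D := by positivity
  constructor
  · linarith [hid, hpos]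
  · have hYeq : Y = a / (D : ℂ) ↔ a.re = D * Y.re ∧ a.im = D * Y.im := by
      rw [eq_div_iff (by exact_mod_cast hDne : (D : ℂ) ≠ 0)]
      constructor
      · intro hh
        have h1 := congrArg Complex.re hh
        have h2 := congrArg Complex.im hh
        simp [Complex.mul_re, Complex.mul_im] at h1 h2
        constructor <;> linarith
      · rintro ⟨h1, h2⟩
        apply Complex.ext <;> simp [Complex.mul_re, Complex.mul_im] <;> linarith
    rw [hYeq]
    constructor
    · intro heq
      have hz : ((a.re - D * Y.re) ^ 2 + (a.im - D * Y.im) ^ 2) / D = 0 := by linarith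
      have hz2 : (a.re - D * Y.re) ^ 2 + (a.im - D * Y.im) ^ 2 = 0 := by
        field_simp at hz; rw [mul_zero] at hz; exact hz
      have h1 : (a.re - D * Y.re) ^ 2 = 0 ∧ (a.im - D * Y.im) ^ 2 = 0 := by
        constructor <;> nlinarith [sq_nonneg (a.re - D * Y.re), sq_nonneg (a.im - D * Y.im)]
      constructor
      · have := pow_eq_zero_iff (n := 2) (by norm_num) |>.mp h1.1; linarith [sub_eq_zero.mp this]
      · have := pow_eq_zero_iff (n := 2) (by norm_num) |>.mp h1.2; linarith [sub_eq_zero.mp this]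
    · rintro ⟨h1, h2⟩
      have : ((a.re - D * Y.re) ^ 2 + (a.im - D * Y.im) ^ 2) / D = 0 := by
        rw [h1, h2]; simp
      linarith [hid, this]

/-- Quadratic transform bound in the network model: for binary scheduling `U`, any
beamformers `V`, any `Γ` with `Γ k f > −1`, and any auxiliary `Y`, one has
`f_q(U,V,Γ,Y) ≤ f_r(U,V,Γ)`, with equality iff
`Y k f = √(w k·(1+Γ k f))·(U k f)·⟪V k f, h k (β k) f⟫ / (S_{k,f} + I_{k,f})`. -/
theorem fq_le_fr {M : ℕ} [Fintype 𝓚] [DecidableEq 𝓚] [Fintype 𝓕]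
    (β : 𝓚 → 𝓑) (h : 𝓚 → 𝓑 → 𝓕 → EuclideanSpace ℂ (Fin M))
    (w : 𝓚 → ℝ) (σ : 𝓚 → 𝓕 → ℝ) (hw : ∀ k, 0 < w k) (hσ : ∀ k f, 0 < σ k f)
    (U : 𝓚 → 𝓕 → ℝ) (hU : ∀ k f, U k f = 0 ∨ U k f = 1)
    (V : 𝓚 → 𝓕 → EuclideanSpace ℂ (Fin M))
    (Γ : 𝓚 → 𝓕 → ℝ) (hΓ : ∀ k f, -1 < Γ k f) (Y : 𝓚 → 𝓕 → ℂ) :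
    fq β h w σ U V Γ Y ≤ fr β h w σ U V Γ ∧
      (fq β h w σ U V Γ Y = fr β h w σ U V Γ ↔
        ∀ k f, Y k f =
          ((Real.sqrt (w k * (1 + Γ k f)) * U k f : ℝ) : ℂ) *
            (inner ℂ (V k f) (h k (β k) f) : ℂ) /
            ((sigPow β h U V k f + intPow β h σ U V k f : ℝ) : ℂ)) := by

    classical
    have hterm : ∀ k f,
        (w k * (Real.log (1 + Γ k f) - Γ k f) +
          2 * ((starRingEnd ℂ) (Y k f) *
            (((Real.sqrt (w k * (1 + Γ k f)) * U k f : ℝ) : ℂ) *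
              (inner ℂ (V k f) (h k (β k) f) : ℂ))).re -
          ‖Y k f‖ ^ 2 * (sigPow β h U V k f + intPow β h σ U V k f)
          ≤ w k * Real.log (1 + Γ k f) - w k * Γ k f +
            w k * (1 + Γ k f) * sigPow β h U V k f /
              (sigPow β h U V k f + intPow β h σ U V k f)) ∧
        ((w k * (Real.log (1 + Γ k f) - Γ k f) +
          2 * ((starRingEnd ℂ) (Y k f) *
            (((Real.sqrt (w k * (1 + Γ k f)) * U k f : ℝ) : ℂ) *
              (inner ℂ (V k f) (h k (β k) f) : ℂ))).re -
          ‖Y k f‖ ^ 2 * (sigPow β h U V k f + intPow β h σ U V k f)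
          = w k * Real.log (1 + Γ k f) - w k * Γ k f +
            w k * (1 + Γ k f) * sigPow β h U V k f /
              (sigPow β h U V k f + intPow β h σ U V k f)) ↔
          Y k f = ((Real.sqrt (w k * (1 + Γ k f)) * U k f : ℝ) : ℂ) *
            (inner ℂ (V k f) (h k (β k) f) : ℂ) /
            ((sigPow β h U V k f + intPow β h σ U V k f : ℝ) : ℂ)) := by
      intro k f
      have hS : 0 ≤ sigPow β h U V k f := by
        unfold sigPow
        rcases hU k f with h0 | h1
        · rw [h0]; simp
        · rw [h1]; positivity
      have hI : 0 < intPow β h σ U V k f := by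
        unfold intPow
        have hsum : 0 ≤ ∑ k' ∈ Finset.univ.erase k,
            U k' f * ‖(inner ℂ (h k (β k') f) (V k' f) : ℂ)‖ ^ 2 := by
          apply Finset.sum_nonneg
          intro k' _
          rcases hU k' f with h0 | h1
          · rw [h0]; simp
          · rw [h1]; positivity
        have := hσ k f
        nlinarith
      set D := sigPow β h U V k f + intPow β h σ U V k f with hDdef
      have hD : 0 < D := by linarith
      set a : ℂ := ((Real.sqrt (w k * (1 + Γ k f)) * U k f : ℝ) : ℂ) *
        (inner ℂ (V k f) (h k (β k) f) : ℂ) with hadef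
      have hwΓ : 0 ≤ w k * (1 + Γ k f) := by
        have := hw k; have := hΓ k f; nlinarith
      have habs : ‖a‖ ^ 2 = w k * (1 + Γ k f) * sigPow β h U V k f := by
        have hconj : (inner ℂ (V k f) (h k (β k) f) : ℂ) =
            (starRingEnd ℂ) (inner ℂ (h k (β k) f) (V k f) : ℂ) := by
          rw [← inner_conj_symm]
        rw [hadef, norm_mul, mul_pow, hconj, Complex.norm_conj, Complex.norm_real, Real.norm_eq_abs]
        unfold sigPow
        have hU2' : (U k f) ^ 2 = U k f := by
          rcases hU k f with h0 | h1
          · rw [h0]; ring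
          · rw [h1]; ring
        have : |Real.sqrt (w k * (1 + Γ k f)) * U k f| ^ 2 =
            w k * (1 + Γ k f) * U k f := by
          rw [sq_abs, mul_pow, Real.sq_sqrt hwΓ, hU2']
        rw [this]; ring
      have hk := key_ineq D hD a (Y k f)
      have hexp : w k * (Real.log (1 + Γ k f) - Γ k f) =
          w k * Real.log (1 + Γ k f) - w k * Γ k f := by ring
      have hdiv : w k * (1 + Γ k f) * sigPow β h U V k f / D = ‖a‖ ^ 2 / D := by
        rw [habs]
      constructor
      · linarith [hk.1, hexp, hdiv]
      · constructor
        · intro heq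
          have h2 : 2 * ((starRingEnd ℂ) (Y k f) * a).re - ‖Y k f‖ ^ 2 * D =
              ‖a‖ ^ 2 / D := by linarith
          exact hk.2.mp h2
        · intro hy
          have h2 := hk.2.mpr hy
          linarith
    have hle : ∀ k ∈ (Finset.univ : Finset 𝓚), ∀ f ∈ (Finset.univ : Finset 𝓕),
        (w k * (Real.log (1 + Γ k f) - Γ k f) +
          2 * ((starRingEnd ℂ) (Y k f) *
            (((Real.sqrt (w k * (1 + Γ k f)) * U k f : ℝ) : ℂ) *
              (inner ℂ (V k f) (h k (β k) f) : ℂ))).re -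
          ‖Y k f‖ ^ 2 * (sigPow β h U V k f + intPow β h σ U V k f))
          ≤ w k * Real.log (1 + Γ k f) - w k * Γ k f +
            w k * (1 + Γ k f) * sigPow β h U V k f /
              (sigPow β h U V k f + intPow β h σ U V k f) :=
      fun k _ f _ => (hterm k f).1
    have hle' : ∀ k ∈ (Finset.univ : Finset 𝓚),
        (∑ f, (w k * (Real.log (1 + Γ k f) - Γ k f) +
          2 * ((starRingEnd ℂ) (Y k f) *
            (((Real.sqrt (w k * (1 + Γ k f)) * U k f : ℝ) : ℂ) *
              (inner ℂ (V k f) (h k (β k) f) : ℂ))).re -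
          ‖Y k f‖ ^ 2 * (sigPow β h U V k f + intPow β h σ U V k f)))
          ≤ ∑ f, (w k * Real.log (1 + Γ k f) - w k * Γ k f +
            w k * (1 + Γ k f) * sigPow β h U V k f /
              (sigPow β h U V k f + intPow β h σ U V k f)) :=
      fun k hk => Finset.sum_le_sum (hle k hk)
    constructor
    · exact Finset.sum_le_sum hle'
    · rw [fq, fr, Finset.sum_eq_sum_iff_of_le hle']
      constructor
      · intro heq k f
        have h1 := heq k (Finset.mem_univ k)
        rw [Finset.sum_eq_sum_iff_of_le (hle k (Finset.mem_univ k))] at h1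
        exact (hterm k f).2.mp (h1 f (Finset.mem_univ f))
      · intro hy k _
        rw [Finset.sum_eq_sum_iff_of_le (hle k (Finset.mem_univ k))]
        intro f _
        exact (hterm k f).2.mpr (hy k f)
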